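/- For every integer d ≥ 5, the second level stabilizer Stab_{Γ_d}(2) of the Fabrykowski–Gupta group Γ_d equals the derived subgroup of the first level stabilizer: Stab_{Γ_d}(2) = [Stab_{Γ_d}(1), Stab_{Γ_d}(1)]. -/

import Mathlib

namespace FG

variable (d : ℕ) [NeZero d]

/-- The rooted-tree automorphism `a` of the `d`-regular rooted tree (vertex set: the free
monoid `{0,…,d-1}^*`), acting by `(x w)^a = ((x+1) mod d) w`. -/
def aFun : List (Fin d) → List (Fin d)
  | [] => []
  | x :: w => (x + 1) :: w

def aInv : List (Fin d) → List (Fin d)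
  | [] => []
  | x :: w => (x - 1) :: w

lemma aInv_aFun : ∀ w, aInv d (aFun d w) = w := by
  intro w; cases w <;> simp [aFun, aInv]

lemma aFun_aInv : ∀ w, aFun d (aInv d w) = w := by
  intro w; cases w <;> simp [aFun, aInv]

def aPerm : Equiv.Perm (List (Fin d)) :=
  ⟨aFun d, aInv d, aInv_aFun d, aFun_aInv d⟩

/-- The rooted-tree automorphism `r`:
`(0 w)^r = 0 w^a`, `(x w)^r = x w` for `1 ≤ x ≤ d-2`, `((d-1) w)^r = (d-1) w^r`. -/
def rFun : List (Fin d) → List (Fin d)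
  | [] => []
  | x :: w => if x = 0 then x :: aFun d w else if x = -1 then x :: rFun w else x :: w

def rInv : List (Fin d) → List (Fin d)
  | [] => []
  | x :: w => if x = 0 then x :: aInv d w else if x = -1 then x :: rInv w else x :: w

lemma rInv_rFun : ∀ w, rInv d (rFun d w) = w := by
  intro w
  induction w with
  | nil => simp [rFun, rInv]
  | cons x w ih =>
    by_cases h0 : x = 0
    · simp [rFun, rInv, h0, aInv_aFun]
    · by_cases h1 : x = -1
      · subst h1
        have hd : ¬ d = 1 := by simpa using h0
        simp [rFun, rInv, hd, ih]
      · simp [rFun, rInv, h0, h1]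

lemma rFun_rInv : ∀ w, rFun d (rInv d w) = w := by
  intro w
  induction w with
  | nil => simp [rFun, rInv]
  | cons x w ih =>
    by_cases h0 : x = 0
    · simp [rFun, rInv, h0, aFun_aInv]
    · by_cases h1 : x = -1
      · subst h1
        have hd : ¬ d = 1 := by simpa using h0
        simp [rFun, rInv, hd, ih]
      · simp [rFun, rInv, h0, h1]

def rPerm : Equiv.Perm (List (Fin d)) :=
  ⟨rFun d, rInv d, rInv_rFun d, rFun_rInv d⟩

/-- The Fabrykowski–Gupta group `Γ_d`, as the subgroup of the permutation group of the
free monoid `{0,…,d-1}^*` generated by the tree automorphisms `a` and `r`. -/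
def Gamma : Subgroup (Equiv.Perm (List (Fin d))) :=
  Subgroup.closure {aPerm d, rPerm d}

/-- The generator `a` as an element of `Γ_d`. -/
def aG : ↥(Gamma d) :=
  ⟨aPerm d, Subgroup.subset_closure (Set.mem_insert _ _)⟩

/-- The generator `r` as an element of `Γ_d`. -/
def rG : ↥(Gamma d) :=
  ⟨rPerm d, Subgroup.subset_closure (Set.mem_insert_iff.mpr (Or.inr rfl))⟩

/-- The `n`-th level stabilizer `Stab_{Γ_d}(n)`: all elements of `Γ_d` fixing every word
of length `n`. -/
def Stab (n : ℕ) : Subgroup ↥(Gamma d) where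
  carrier := { g | ∀ w : List (Fin d), w.length = n → (g : Equiv.Perm (List (Fin d))) w = w }
  one_mem' := by intro w _; rfl
  mul_mem' := by
    intro g h hg hh w hw
    have : ((g * h : ↥(Gamma d)) : Equiv.Perm (List (Fin d))) w
        = (g : Equiv.Perm (List (Fin d))) ((h : Equiv.Perm (List (Fin d))) w) := rfl
    rw [this, hh w hw, hg w hw]
  inv_mem' := by
    intro g hg w hw
    have h1 := hg w hw
    calc ((g⁻¹ : ↥(Gamma d)) : Equiv.Perm (List (Fin d))) w
        = (g : Equiv.Perm (List (Fin d)))⁻¹ ((g : Equiv.Perm (List (Fin d))) w) := by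
          rw [h1]; rfl
      _ = w := by simp

/-- The conjugate `g_i = r^{a^i} = a^{-i} r a^i` in `Γ_d`. -/
def gG (i : ℕ) : ↥(Gamma d) := (aG d ^ i)⁻¹ * rG d * aG d ^ i

section Aux
variable {d}
open Fin.NatCast Fin.CommRing commutatorElement

lemma aPerm_cons (x : Fin d) (w) : aPerm d (x :: w) = (x + 1) :: w := rfl
lemma aPerm_nil : aPerm d [] = [] := rfl
lemma rPerm_nil : rPerm d [] = [] := rfl
lemma rPerm_cons (x : Fin d) (w) : rPerm d (x :: w) =
    if x = 0 then x :: aFun d w else if x = -1 then x :: rFun d w else x :: w := rfl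

lemma aFun_length (w : List (Fin d)) : (aFun d w).length = w.length := by
  cases w <;> simp [aFun]

lemma rFun_length (w : List (Fin d)) : (rFun d w).length = w.length := by
  induction w with
  | nil => simp [rFun]
  | cons x w ih =>
    rw [rFun]
    split_ifs <;> simp [aFun_length, ih]

lemma rFun_single (y : Fin d) : rFun d [y] = [y] := by
  rw [rFun]; split_ifs <;> simp [aFun, rFun]

lemma rFun_cons_head (y : Fin d) (w : List (Fin d)) :
    ∃ w', rFun d (y :: w) = y :: w' ∧ w'.length = w.length := by
  rw [rFun]
  split_ifs with h1 h2
  · exact ⟨aFun d w, rfl, aFun_length w⟩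
  · exact ⟨rFun d w, rfl, rFun_length w⟩
  · exact ⟨w, rfl, rfl⟩

lemma aPerm_pow_cons (n : ℕ) (x : Fin d) (w) :
    (aPerm d ^ n) (x :: w) = (x + (n : Fin d)) :: w := by
  induction n with
  | zero => simp
  | succ n ih =>
    rw [pow_succ', Equiv.Perm.mul_apply, ih, aPerm_cons]
    congr 1
    push_cast
    ring

lemma aPerm_pow_nil (n : ℕ) : (aPerm d ^ n) ([] : List (Fin d)) = [] := by
  induction n with
  | zero => simp
  | succ n ih => rw [pow_succ', Equiv.Perm.mul_apply, ih, aPerm_nil]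

lemma aPerm_pow_d : aPerm d ^ d = 1 := by
  ext w
  cases w with
  | nil => simp [aPerm_pow_nil]
  | cons x w => simp [aPerm_pow_cons, Fin.natCast_self]

lemma rPerm_pow_nil (n : ℕ) : (rPerm d ^ n) ([] : List (Fin d)) = [] := by
  induction n with
  | zero => simp
  | succ n ih => rw [pow_succ', Equiv.Perm.mul_apply, ih, rPerm_nil]

lemma rPerm_pow_cons (n : ℕ) (x : Fin d) (w) :
    (rPerm d ^ n) (x :: w) =
      if x = 0 then x :: (aPerm d ^ n) w
      else if x = -1 then x :: (rPerm d ^ n) w else x :: w := by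
  induction n generalizing w with
  | zero => split_ifs <;> simp
  | succ n ih =>
    rw [pow_succ', Equiv.Perm.mul_apply, ih]
    split_ifs with h1 h2
    · rw [rPerm_cons, if_pos h1, pow_succ', Equiv.Perm.mul_apply]; rfl
    · rw [rPerm_cons, if_neg h1, if_pos h2, Equiv.Perm.mul_apply]; rfl
    · rw [rPerm_cons, if_neg h1, if_neg h2]

lemma rPerm_pow_d_apply : ∀ w : List (Fin d), (rPerm d ^ d) w = w := by
  intro w
  induction w with
  | nil => simp [rPerm_pow_nil]
  | cons x w ih =>
    rw [rPerm_pow_cons]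
    split_ifs with h1 h2
    · rw [aPerm_pow_d]; simp
    · rw [ih]
    · rfl

lemma rPerm_pow_d : rPerm d ^ d = 1 := Equiv.ext rPerm_pow_d_apply

/-- If `g ∈ Γ_d`, then `g` fixes the root, permutes first letters by adding a constant `c`,
and permutes second letters by adding a constant `t x` depending on the first letter. -/
lemma struct {g : Equiv.Perm (List (Fin d))} (hg : g ∈ Gamma d) :
    ∃ c : Fin d, ∃ t : Fin d → Fin d,
      g [] = [] ∧ (∀ x, g [x] = [x + c]) ∧
      (∀ x y (w : List (Fin d)), ∃ w',
        g (x :: y :: w) = (x + c) :: (y + t x) :: w' ∧ w'.length = w.length) := by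
  induction hg using Subgroup.closure_induction with
  | mem p hp =>
    rw [Set.mem_insert_iff, Set.mem_singleton_iff] at hp
    rcases hp with rfl | rfl
    · refine ⟨1, 0, rfl, fun x => rfl, fun x y w => ⟨w, ?_, rfl⟩⟩
      rw [aPerm_cons]
      simp
    · refine ⟨0, fun x => if x = 0 then 1 else 0, rfl, ?_, ?_⟩
      · intro x
        have h : rPerm d [x] = rFun d [x] := rfl
        rw [h, rFun_single, add_zero]
      · intro x y w
        by_cases hx0 : x = 0
        · refine ⟨w, ?_, rfl⟩
          rw [rPerm_cons, if_pos hx0]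
          simp [hx0, aFun]
        · by_cases hx1 : x = -1
          · obtain ⟨w', hw', hlen⟩ := rFun_cons_head y w
            refine ⟨w', ?_, hlen⟩
            rw [rPerm_cons, if_neg hx0, if_pos hx1, hw']
            simp [hx0]
          · refine ⟨w, ?_, rfl⟩
            rw [rPerm_cons, if_neg hx0, if_neg hx1]
            simp [hx0]
  | one => exact ⟨0, 0, rfl, by simp, fun x y w => ⟨w, by simp, rfl⟩⟩
  | mul p q hp hq ihp ihq =>
    obtain ⟨c1, t1, hn1, h11, h21⟩ := ihp
    obtain ⟨c2, t2, hn2, h12, h22⟩ := ihq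
    refine ⟨c2 + c1, fun v => t2 v + t1 (v + c2), ?_, ?_, ?_⟩
    · rw [Equiv.Perm.mul_apply, hn2, hn1]
    · intro x
      rw [Equiv.Perm.mul_apply, h12, h11, add_assoc]
    · intro x y w
      obtain ⟨w1, hw1, hl1⟩ := h22 x y w
      obtain ⟨w2, hw2, hl2⟩ := h21 (x + c2) (y + t2 x) w1
      refine ⟨w2, ?_, by rw [hl2, hl1]⟩
      rw [Equiv.Perm.mul_apply, hw1, hw2]
      simp [add_assoc]
  | inv p hp ihp =>
    obtain ⟨c, t, hn, h1, h2⟩ := ihp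
    refine ⟨-c, fun v => -(t (v - c)), ?_, ?_, ?_⟩
    · have : (p⁻¹ : Equiv.Perm (List (Fin d))) (p []) = [] := Equiv.symm_apply_apply p []
      rw [hn] at this
      exact this
    · intro v
      have h3 : p [v - c] = [v + -c + c] := by
        rw [h1]
        congr 1
        ring_nf
      have : (p⁻¹ : Equiv.Perm (List (Fin d))) (p [v - c]) = [v - c] :=
        Equiv.symm_apply_apply p _
      rw [h3] at this
      have h4 : v + -c + c = v := by ring
      rw [h4] at this
      rw [this]
      congr 1
      ring_nf
    · intro v u w
      have hx0 : p ((p⁻¹ : Equiv.Perm (List (Fin d))) (v :: u :: w)) = v :: u :: w :=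
        Equiv.apply_symm_apply p _
      rcases hw0 : (p⁻¹ : Equiv.Perm (List (Fin d))) (v :: u :: w) with _ | ⟨a, _ | ⟨b, l⟩⟩
      · rw [hw0, hn] at hx0
        simp at hx0
      · exfalso
        rw [hw0, h1 a] at hx0
        have := congrArg List.length hx0
        simp at this
      · rw [hw0] at hx0
        obtain ⟨w', hw', hlen⟩ := h2 a b l
        rw [hw'] at hx0
        injection hx0 with e1 e2
        injection e2 with e3 e4
        refine ⟨l, ?_, by rw [← e4, hlen]⟩
        have q2 : a + c - c = a := by ring
        subst e1
        subst e3
        simp only [q2]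
        congr 1
        · ring
        congr 1
        ring

/-- first-letter rotation amount of `g`. -/
def cRaw (g : Equiv.Perm (List (Fin d))) : Fin d := (g [0]).headI

/-- second-letter rotation amount of `g` below the first letter `x`. -/
def tRaw (g : Equiv.Perm (List (Fin d))) (x : Fin d) : Fin d := (g [x, 0]).tail.headI

lemma spec_nil {g : Equiv.Perm (List (Fin d))} (hg : g ∈ Gamma d) : g [] = [] :=
  (struct hg).choose_spec.choose_spec.1

lemma spec_c {g : Equiv.Perm (List (Fin d))} (hg : g ∈ Gamma d) (x : Fin d) :
    g [x] = [x + cRaw g] := by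
  obtain ⟨c, t, hn, h1, h2⟩ := struct hg
  have hc : cRaw g = c := by
    rw [cRaw, h1 0, List.headI, zero_add]
  rw [hc, h1]

lemma spec_t {g : Equiv.Perm (List (Fin d))} (hg : g ∈ Gamma d) (x y : Fin d) :
    g [x, y] = [x + cRaw g, y + tRaw g x] := by
  obtain ⟨c, t, hn, h1, h2⟩ := struct hg
  have hc : cRaw g = c := by
    rw [cRaw, h1 0, List.headI, zero_add]
  have ht : tRaw g x = t x := by
    obtain ⟨w', hw', hlen⟩ := h2 x 0 []
    rw [List.length_nil] at hlen
    rw [List.length_eq_zero_iff] at hlen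
    subst hlen
    rw [tRaw, hw', List.tail, List.headI, zero_add]
  obtain ⟨w', hw', hlen⟩ := h2 x y []
  rw [List.length_nil, List.length_eq_zero_iff] at hlen
  subst hlen
  rw [hc, ht, hw']

lemma cRaw_mul {g h : Equiv.Perm (List (Fin d))} (hg : g ∈ Gamma d) (hh : h ∈ Gamma d) :
    cRaw (g * h) = cRaw g + cRaw h := by
  have : (g * h) [(0 : Fin d)] = [0 + cRaw h + cRaw g] := by
    rw [Equiv.Perm.mul_apply, spec_c hh, spec_c hg]
  rw [cRaw, this, List.headI]
  ring

lemma tRaw_mul {g h : Equiv.Perm (List (Fin d))} (hg : g ∈ Gamma d) (hh : h ∈ Gamma d)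
    (x : Fin d) : tRaw (g * h) x = tRaw h x + tRaw g (x + cRaw h) := by
  have : (g * h) [x, (0 : Fin d)] =
      [x + cRaw h + cRaw g, 0 + tRaw h x + tRaw g (x + cRaw h)] := by
    rw [Equiv.Perm.mul_apply, spec_t hh, spec_t hg]
  rw [tRaw, this, List.tail, List.headI, zero_add]

lemma cRaw_one : cRaw (1 : Equiv.Perm (List (Fin d))) = 0 := rfl

lemma tRaw_one (x : Fin d) : tRaw (1 : Equiv.Perm (List (Fin d))) x = 0 := rfl

lemma mem_stab_iff (n : ℕ) (g : ↥(Gamma d)) :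
    g ∈ Stab d n ↔ ∀ w : List (Fin d), w.length = n →
      (g : Equiv.Perm (List (Fin d))) w = w := Iff.rfl

lemma mem_stab1_iff (g : ↥(Gamma d)) :
    g ∈ Stab d 1 ↔ cRaw (g : Equiv.Perm (List (Fin d))) = 0 := by
  rw [mem_stab_iff]
  constructor
  · intro h
    have h0 := h [0] rfl
    rw [cRaw, h0]
    rfl
  · intro h w hw
    obtain ⟨x, rfl⟩ : ∃ x, w = [x] := by
      cases w with
      | nil => simp at hw
      | cons a t =>
        cases t with
        | nil => exact ⟨a, rfl⟩
        | cons b t' => simp at hw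
    rw [spec_c g.2, h, add_zero]

lemma mem_stab2_iff (g : ↥(Gamma d)) :
    g ∈ Stab d 2 ↔ cRaw (g : Equiv.Perm (List (Fin d))) = 0 ∧
      ∀ x, tRaw (g : Equiv.Perm (List (Fin d))) x = 0 := by
  rw [mem_stab_iff]
  constructor
  · intro h
    have key : ∀ x y : Fin d, ([x + cRaw (g : Equiv.Perm (List (Fin d))),
        y + tRaw (g : Equiv.Perm (List (Fin d))) x] : List (Fin d)) = [x, y] := by
      intro x y
      rw [← spec_t g.2]
      exact h [x, y] rfl
    constructor
    · have := key 0 0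
      injection this with e1 _
      simpa using e1
    · intro x
      have := key x 0
      injection this with e1 e2
      injection e2 with e3 _
      simpa using e3
  · rintro ⟨h1, h2⟩ w hw
    obtain ⟨x, y, rfl⟩ : ∃ x y, w = [x, y] := by
      cases w with
      | nil => simp at hw
      | cons a t =>
        cases t with
        | nil => simp at hw
        | cons b t' =>
          cases t' with
          | nil => exact ⟨a, b, rfl⟩
          | cons e t'' => simp at hw
    rw [spec_t g.2, h1, h2, add_zero, add_zero]

lemma coe_aG_pow (i : ℕ) :
    ((aG d ^ i : ↥(Gamma d)) : Equiv.Perm (List (Fin d))) = aPerm d ^ i := by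
  simp [aG]

lemma aG_pow_d : aG d ^ d = 1 := by
  apply Subtype.ext
  rw [coe_aG_pow, aPerm_pow_d]
  rfl

lemma rG_pow_d : rG d ^ d = 1 := by
  apply Subtype.ext
  have : ((rG d ^ d : ↥(Gamma d)) : Equiv.Perm (List (Fin d))) = rPerm d ^ d := by
    simp [rG]
  rw [this, rPerm_pow_d]
  rfl

lemma conj_pow_eq {G' : Type*} [Group G'] (u r : G') (n : ℕ) :
    (u⁻¹ * r * u) ^ n = u⁻¹ * r ^ n * u := by
  induction n with
  | zero => simp
  | succ n ih => rw [pow_succ, ih, pow_succ]; group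

lemma gG_pow_d (i : ℕ) : gG d i ^ d = 1 := by
  rw [gG, conj_pow_eq, rG_pow_d]
  group

lemma gG_mod (i : ℕ) : gG d i = gG d (i % d) := by
  have h : aG d ^ i = aG d ^ (i % d) := by
    conv_lhs => rw [← Nat.div_add_mod i d]
    rw [pow_add, pow_mul, aG_pow_d, one_pow, one_mul]
  rw [gG, gG, h]

lemma coe_gG (i : ℕ) : ((gG d i : ↥(Gamma d)) : Equiv.Perm (List (Fin d))) =
    (aPerm d ^ i)⁻¹ * rPerm d * aPerm d ^ i := by
  simp [gG, aG, rG]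

lemma aPerm_pow_inv_cons (i : ℕ) (v : Fin d) (L : List (Fin d)) :
    (aPerm d ^ i)⁻¹ ((v + (i : Fin d)) :: L) = v :: L := by
  rw [← aPerm_pow_cons]
  exact Equiv.symm_apply_apply _ _

lemma gG_apply1 (i : ℕ) (x : Fin d) :
    ((gG d i : ↥(Gamma d)) : Equiv.Perm (List (Fin d))) [x] = [x] := by
  have hr : rPerm d [x + (i : Fin d)] = [x + (i : Fin d)] := rFun_single _
  rw [coe_gG, Equiv.Perm.mul_apply, Equiv.Perm.mul_apply, aPerm_pow_cons, hr,
    aPerm_pow_inv_cons]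

lemma gG_apply2 (i : ℕ) (x y : Fin d) :
    ((gG d i : ↥(Gamma d)) : Equiv.Perm (List (Fin d))) [x, y]
      = [x, if x + (i : Fin d) = 0 then y + 1 else y] := by
  rw [coe_gG, Equiv.Perm.mul_apply, Equiv.Perm.mul_apply, aPerm_pow_cons, rPerm_cons]
  by_cases hxi : x + (i : Fin d) = 0
  · rw [if_pos hxi, if_pos hxi]
    have : aFun d [y] = [y + 1] := rfl
    rw [this, aPerm_pow_inv_cons]
  · rw [if_neg hxi, if_neg hxi]
    by_cases hxi1 : x + (i : Fin d) = -1
    · rw [if_pos hxi1, rFun_single, aPerm_pow_inv_cons]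
    · rw [if_neg hxi1, aPerm_pow_inv_cons]

lemma gG_mem_stab1 (i : ℕ) : gG d i ∈ Stab d 1 := by
  rw [mem_stab1_iff, cRaw, gG_apply1]
  rfl

lemma tRaw_gG (i : ℕ) (x : Fin d) :
    tRaw ((gG d i : ↥(Gamma d)) : Equiv.Perm (List (Fin d))) x
      = if x + (i : Fin d) = 0 then 1 else 0 := by
  rw [tRaw, gG_apply2]
  split_ifs <;> simp

lemma cRaw_aG_pow (k : ℕ) :
    cRaw ((aG d ^ k : ↥(Gamma d)) : Equiv.Perm (List (Fin d))) = (k : Fin d) := by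
  rw [cRaw, coe_aG_pow, aPerm_pow_cons]
  simp

lemma cRaw_inv {g : Equiv.Perm (List (Fin d))} (hg : g ∈ Gamma d) :
    cRaw g⁻¹ = -cRaw g := by
  have h := cRaw_mul hg (inv_mem hg)
  rw [mul_inv_cancel, cRaw_one] at h
  exact eq_neg_of_add_eq_zero_right h.symm

lemma tRaw_inv {g : Equiv.Perm (List (Fin d))} (hg : g ∈ Gamma d)
    (hc : cRaw g = 0) (x : Fin d) : tRaw g⁻¹ x = -tRaw g x := by
  have hcinv : cRaw g⁻¹ = 0 := by rw [cRaw_inv hg, hc, neg_zero]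
  have h := tRaw_mul hg (inv_mem hg) x
  rw [mul_inv_cancel, tRaw_one, hcinv, add_zero] at h
  exact eq_neg_of_add_eq_zero_left h.symm

/-- The subgroup of `Γ_d` generated by the conjugates `g_i`. -/
def Ngen : Subgroup ↥(Gamma d) := Subgroup.closure (Set.range (gG d))

lemma Ngen_le_stab1 : (Ngen : Subgroup ↥(Gamma d)) ≤ Stab d 1 := by
  rw [Ngen, Subgroup.closure_le]
  rintro _ ⟨i, rfl⟩
  exact gG_mem_stab1 i

lemma conj_aG_mem {h : ↥(Gamma d)} (hh : h ∈ (Ngen : Subgroup ↥(Gamma d))) :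
    (aG d)⁻¹ * h * aG d ∈ (Ngen : Subgroup ↥(Gamma d)) := by
  induction hh using Subgroup.closure_induction with
  | mem p hp =>
    obtain ⟨i, rfl⟩ := hp
    have e : (aG d)⁻¹ * gG d i * aG d = gG d (i + 1) := by
      rw [gG, gG, pow_succ]
      group
    rw [e]
    exact Subgroup.subset_closure ⟨i + 1, rfl⟩
  | one => simpa using one_mem _
  | mul p q hp hq ihp ihq =>
    have e : (aG d)⁻¹ * (p * q) * aG d = ((aG d)⁻¹ * p * aG d) * ((aG d)⁻¹ * q * aG d) := by
      group
    rw [e]; exact mul_mem ihp ihq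
  | inv p hp ihp =>
    have e : (aG d)⁻¹ * p⁻¹ * aG d = ((aG d)⁻¹ * p * aG d)⁻¹ := by group
    rw [e]; exact inv_mem ihp

lemma aG_pow_pred (hd : 5 ≤ d) : aG d ^ (d - 1) = (aG d)⁻¹ := by
  have h1 : aG d ^ (d - 1) * aG d = 1 := by
    rw [← pow_succ]
    have e : d - 1 + 1 = d := by omega
    rw [e, aG_pow_d]
  exact eq_inv_of_mul_eq_one_left h1

lemma conj_aGinv_mem (hd : 5 ≤ d) {h : ↥(Gamma d)} (hh : h ∈ (Ngen : Subgroup ↥(Gamma d))) :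
    aG d * h * (aG d)⁻¹ ∈ (Ngen : Subgroup ↥(Gamma d)) := by
  induction hh using Subgroup.closure_induction with
  | mem p hp =>
    obtain ⟨i, rfl⟩ := hp
    have e : aG d * gG d i * (aG d)⁻¹ = gG d (i + (d - 1)) := by
      rw [gG, gG, pow_add, aG_pow_pred hd]
      group
    rw [e]
    exact Subgroup.subset_closure ⟨i + (d - 1), rfl⟩
  | one => simpa using one_mem _
  | mul p q hp hq ihp ihq =>
    have e : aG d * (p * q) * (aG d)⁻¹ = (aG d * p * (aG d)⁻¹) * (aG d * q * (aG d)⁻¹) := by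
      group
    rw [e]; exact mul_mem ihp ihq
  | inv p hp ihp =>
    have e : aG d * p⁻¹ * (aG d)⁻¹ = (aG d * p * (aG d)⁻¹)⁻¹ := by group
    rw [e]; exact inv_mem ihp

lemma conj_aG_pow_mem (k : ℕ) {h : ↥(Gamma d)} (hh : h ∈ (Ngen : Subgroup ↥(Gamma d))) :
    (aG d ^ k)⁻¹ * h * aG d ^ k ∈ (Ngen : Subgroup ↥(Gamma d)) := by
  induction k with
  | zero => simpa using hh
  | succ k ih =>
    have e : (aG d ^ (k + 1))⁻¹ * h * aG d ^ (k + 1)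
        = (aG d)⁻¹ * ((aG d ^ k)⁻¹ * h * aG d ^ k) * aG d := by
      rw [pow_succ]; group
    rw [e]
    exact conj_aG_mem ih

lemma conj_aG_pow_mem' (hd : 5 ≤ d) (k : ℕ) {h : ↥(Gamma d)}
    (hh : h ∈ (Ngen : Subgroup ↥(Gamma d))) :
    aG d ^ k * h * (aG d ^ k)⁻¹ ∈ (Ngen : Subgroup ↥(Gamma d)) := by
  induction k with
  | zero => simpa using hh
  | succ k ih =>
    have e : aG d ^ (k + 1) * h * (aG d ^ (k + 1))⁻¹
        = aG d * (aG d ^ k * h * (aG d ^ k)⁻¹) * (aG d)⁻¹ := by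
      rw [pow_succ']; group
    rw [e]
    exact conj_aGinv_mem hd ih

lemma exists_decomp (hd : 5 ≤ d) (g : ↥(Gamma d)) :
    ∃ h ∈ (Ngen : Subgroup ↥(Gamma d)), ∃ k : ℕ, g = h * aG d ^ k := by
  obtain ⟨g, hg⟩ := g
  induction hg using Subgroup.closure_induction with
  | mem p hp =>
    rw [Set.mem_insert_iff, Set.mem_singleton_iff] at hp
    rcases hp with rfl | rfl
    · refine ⟨1, one_mem _, 1, ?_⟩
      rw [one_mul, pow_one]
      exact Subtype.ext rfl
    · refine ⟨gG d 0, Subgroup.subset_closure ⟨0, rfl⟩, 0, ?_⟩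
      have e : gG d 0 * aG d ^ 0 = rG d := by
        rw [gG]
        simp
      rw [e]
      exact Subtype.ext rfl
  | one =>
    refine ⟨1, one_mem _, 0, ?_⟩
    rw [pow_zero, mul_one]
    exact Subtype.ext rfl
  | mul p q hp hq ihp ihq =>
    obtain ⟨h1, hm1, k1, e1⟩ := ihp
    obtain ⟨h2, hm2, k2, e2⟩ := ihq
    refine ⟨h1 * (aG d ^ k1 * h2 * (aG d ^ k1)⁻¹),
      mul_mem hm1 (conj_aG_pow_mem' hd k1 hm2), k1 + k2, ?_⟩
    have e : (⟨p * q, mul_mem hp hq⟩ : ↥(Gamma d)) = ⟨p, hp⟩ * ⟨q, hq⟩ := rfl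
    rw [e, e1, e2, pow_add]
    group
  | inv p hp ihp =>
    obtain ⟨h, hm, k, e⟩ := ihp
    refine ⟨(aG d ^ k)⁻¹ * h⁻¹ * aG d ^ k, conj_aG_pow_mem k (inv_mem hm), k * (d - 1), ?_⟩
    have e2 : (⟨p⁻¹, inv_mem hp⟩ : ↥(Gamma d)) = (⟨p, hp⟩ : ↥(Gamma d))⁻¹ := rfl
    have h3 : aG d ^ (k * (d - 1)) = (aG d ^ k)⁻¹ := by
      have h4 : aG d ^ (k * (d - 1)) * aG d ^ k = 1 := by
        rw [← pow_add]
        have e3 : k * (d - 1) + k = d * k := by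
          have : 1 ≤ d := by omega
          calc k * (d - 1) + k = k * (d - 1 + 1) := by ring
          _ = d * k := by rw [Nat.sub_add_cancel this]; ring
        rw [e3, pow_mul, aG_pow_d, one_pow]
      exact eq_inv_of_mul_eq_one_left h4
    rw [e2, e, h3]
    group

lemma stab1_le_Ngen (hd : 5 ≤ d) : Stab d 1 ≤ (Ngen : Subgroup ↥(Gamma d)) := by
  intro g hg
  obtain ⟨h, hm, k, rfl⟩ := exists_decomp hd g
  have hc : cRaw ((h * aG d ^ k : ↥(Gamma d)) : Equiv.Perm (List (Fin d))) = 0 :=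
    (mem_stab1_iff _).mp hg
  have hch : cRaw ((h : ↥(Gamma d)) : Equiv.Perm (List (Fin d))) = 0 :=
    (mem_stab1_iff _).mp (Ngen_le_stab1 hm)
  have hcm : cRaw ((h * aG d ^ k : ↥(Gamma d)) : Equiv.Perm (List (Fin d)))
      = cRaw ((h : ↥(Gamma d)) : Equiv.Perm (List (Fin d)))
        + cRaw ((aG d ^ k : ↥(Gamma d)) : Equiv.Perm (List (Fin d))) :=
    cRaw_mul h.2 (aG d ^ k).2
  rw [hcm, hch, cRaw_aG_pow, zero_add] at hc
  obtain ⟨m, rfl⟩ := (Fin.natCast_eq_zero).mp hc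
  rw [pow_mul, aG_pow_d, one_pow, mul_one]
  exact hm

/-- The second-letter displacement vector, as a homomorphism on `Stab 1`. -/
def tau : ↥(Stab d 1) →* Multiplicative (Fin d → Fin d) :=
  MonoidHom.mk' (fun g => Multiplicative.ofAdd
    (tRaw ((g : ↥(Gamma d)) : Equiv.Perm (List (Fin d))))) (fun g h => by
    have hch : cRaw ((h : ↥(Gamma d)) : Equiv.Perm (List (Fin d))) = 0 :=
      (mem_stab1_iff _).mp h.2
    have key : tRaw (((g * h : ↥(Stab d 1)) : ↥(Gamma d)) : Equiv.Perm (List (Fin d)))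
        = tRaw ((g : ↥(Gamma d)) : Equiv.Perm (List (Fin d)))
          + tRaw ((h : ↥(Gamma d)) : Equiv.Perm (List (Fin d))) := by
      funext x
      have e : (((g * h : ↥(Stab d 1)) : ↥(Gamma d)) : Equiv.Perm (List (Fin d)))
          = ((g : ↥(Gamma d)) : Equiv.Perm (List (Fin d)))
            * ((h : ↥(Gamma d)) : Equiv.Perm (List (Fin d))) := rfl
      rw [e, tRaw_mul (g : ↥(Gamma d)).2 (h : ↥(Gamma d)).2, hch, add_zero, Pi.add_apply]
      exact add_comm _ _
    beta_reduce
    rw [key]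
    rfl)

/-- `g_i`, as an element of `Stab 1`. -/
def ghat (i : Fin d) : ↥(Stab d 1) := ⟨gG d i.1, gG_mem_stab1 i.1⟩

lemma ghat_pow_d (i : Fin d) : ghat i ^ d = 1 :=
  Subtype.ext (gG_pow_d i.1)

lemma of_decomp (hd : 5 ≤ d) {u : ↥(Gamma d)} (hu : u ∈ (Ngen : Subgroup ↥(Gamma d))) :
    ∃ (hu1 : u ∈ Stab d 1) (k : Fin d → ℤ),
      Abelianization.of (⟨u, hu1⟩ : ↥(Stab d 1))
        = ∏ i : Fin d, (Abelianization.of (ghat i)) ^ (k i) := by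
  have hdpos : 0 < d := by omega
  induction hu using Subgroup.closure_induction with
  | mem p hp =>
    obtain ⟨j, rfl⟩ := hp
    refine ⟨gG_mem_stab1 j,
      fun i => if i = (⟨j % d, Nat.mod_lt j hdpos⟩ : Fin d) then 1 else 0, ?_⟩
    rw [Finset.prod_eq_single (⟨j % d, Nat.mod_lt j hdpos⟩ : Fin d)]
    · beta_reduce
      rw [if_pos rfl, zpow_one]
      congr 1
      exact Subtype.ext (gG_mod j)
    · intro b _ hb
      beta_reduce
      rw [if_neg hb, zpow_zero]
    · intro hmem
      exact absurd (Finset.mem_univ _) hmem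
  | one =>
    refine ⟨one_mem _, 0, ?_⟩
    have e : (⟨(1 : ↥(Gamma d)), one_mem _⟩ : ↥(Stab d 1)) = 1 := rfl
    rw [e, map_one]
    simp
  | mul p q hp hq ihp ihq =>
    obtain ⟨hp1, k1, e1⟩ := ihp
    obtain ⟨hq1, k2, e2⟩ := ihq
    refine ⟨mul_mem hp1 hq1, k1 + k2, ?_⟩
    have e : (⟨p * q, mul_mem hp1 hq1⟩ : ↥(Stab d 1)) = ⟨p, hp1⟩ * ⟨q, hq1⟩ := rfl
    rw [e, map_mul, e1, e2, ← Finset.prod_mul_distrib]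
    exact Finset.prod_congr rfl fun i _ => by rw [Pi.add_apply, zpow_add]
  | inv p hp ihp =>
    obtain ⟨hp1, k, e⟩ := ihp
    refine ⟨inv_mem hp1, -k, ?_⟩
    have e2 : (⟨p⁻¹, inv_mem hp1⟩ : ↥(Stab d 1)) = (⟨p, hp1⟩ : ↥(Stab d 1))⁻¹ := rfl
    rw [e2, map_inv, e, ← Finset.prod_inv_distrib]
    exact Finset.prod_congr rfl fun i _ => by rw [Pi.neg_apply, zpow_neg]

lemma coe_ghat (i : Fin d) :
    (((ghat i : ↥(Stab d 1)) : ↥(Gamma d)) : Equiv.Perm (List (Fin d)))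
      = ((gG d i.1 : ↥(Gamma d)) : Equiv.Perm (List (Fin d))) := rfl

lemma main_result (hd : 5 ≤ d) : Stab d 2 = ⁅Stab d 1, Stab d 1⁆ := by
  apply le_antisymm
  · intro g hg2
    obtain ⟨hc, ht⟩ := (mem_stab2_iff g).mp hg2
    have hg1 : g ∈ Stab d 1 := (mem_stab1_iff g).mpr hc
    have hgN : g ∈ (Ngen : Subgroup ↥(Gamma d)) := stab1_le_Ngen hd hg1
    obtain ⟨hu1, k, hk⟩ := of_decomp hd hgN
    have coe_tau : ∀ x : ↥(Stab d 1), (tau x).toAdd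
        = tRaw ((x : ↥(Gamma d)) : Equiv.Perm (List (Fin d))) := fun _ => rfl
    have hdvd : ∀ i0 : Fin d, (d : ℤ) ∣ k i0 := by
      intro i0
      have hlift := congrArg (Abelianization.lift tau) hk
      rw [Abelianization.lift_apply_of, map_prod] at hlift
      simp only [map_zpow, Abelianization.lift_apply_of] at hlift
      have hadd := congrArg (fun z : Multiplicative (Fin d → Fin d) => z.toAdd (-i0)) hlift
      simp only [toAdd_prod, toAdd_zpow, coe_tau, coe_ghat, tRaw_gG, Fin.cast_val_eq_self,
        Finset.sum_apply, Pi.smul_apply] at hadd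
      rw [ht] at hadd
      have hcond : ∀ i : Fin d, (-i0 + i = 0) ↔ (i = i0) := by
        intro i
        constructor
        · intro h
          linear_combination h
        · intro h
          rw [h]
          ring
      simp only [hcond, smul_ite, smul_zero, Finset.sum_ite_eq', Finset.mem_univ, if_true,
        zsmul_one] at hadd
      exact (CharP.intCast_eq_zero_iff (Fin d) d (k i0)).mp hadd.symm
    have hone : ∀ i : Fin d, (Abelianization.of (ghat i)) ^ (k i) = 1 := by
      intro i
      obtain ⟨m, hm⟩ := hdvd i
      rw [hm, zpow_mul, zpow_natCast, ← map_pow, ghat_pow_d, map_one, one_zpow]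
    rw [Finset.prod_congr rfl fun i _ => hone i, Finset.prod_const_one] at hk
    have hcomm : (⟨g, hu1⟩ : ↥(Stab d 1)) ∈ commutator ↥(Stab d 1) :=
      (QuotientGroup.eq_one_iff _).mp hk
    have hmap : Subgroup.map (Stab d 1).subtype (commutator ↥(Stab d 1))
        = ⁅Stab d 1, Stab d 1⁆ := by
      rw [commutator_def, Subgroup.map_commutator, ← MonoidHom.range_eq_map,
        Subgroup.range_subtype]
    rw [← hmap]
    exact ⟨⟨g, hu1⟩, hcomm, rfl⟩
  · rw [Subgroup.commutator_le]
    intro g hg h hh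
    rw [mem_stab2_iff]
    have hG := g.2
    have hH := h.2
    have hGH := mul_mem hG hH
    have hGHG := mul_mem hGH (inv_mem hG)
    have hcg : cRaw ((g : ↥(Gamma d)) : Equiv.Perm (List (Fin d))) = 0 :=
      (mem_stab1_iff g).mp hg
    have hch : cRaw ((h : ↥(Gamma d)) : Equiv.Perm (List (Fin d))) = 0 :=
      (mem_stab1_iff h).mp hh
    have hcginv : cRaw ((g : ↥(Gamma d)) : Equiv.Perm (List (Fin d)))⁻¹ = 0 := by
      rw [cRaw_inv hG, hcg, neg_zero]
    have hchinv : cRaw ((h : ↥(Gamma d)) : Equiv.Perm (List (Fin d)))⁻¹ = 0 := by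
      rw [cRaw_inv hH, hch, neg_zero]
    have hcgh : cRaw (((g : ↥(Gamma d)) : Equiv.Perm (List (Fin d)))
        * ((h : ↥(Gamma d)) : Equiv.Perm (List (Fin d)))) = 0 := by
      rw [cRaw_mul hG hH, hcg, hch, add_zero]
    have hcghg : cRaw (((g : ↥(Gamma d)) : Equiv.Perm (List (Fin d)))
        * ((h : ↥(Gamma d)) : Equiv.Perm (List (Fin d)))
        * ((g : ↥(Gamma d)) : Equiv.Perm (List (Fin d)))⁻¹) = 0 := by
      rw [cRaw_mul hGH (inv_mem hG), hcgh, hcginv, add_zero]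
    have hco : ((⁅g, h⁆ : ↥(Gamma d)) : Equiv.Perm (List (Fin d)))
        = ((g : ↥(Gamma d)) : Equiv.Perm (List (Fin d)))
          * ((h : ↥(Gamma d)) : Equiv.Perm (List (Fin d)))
          * ((g : ↥(Gamma d)) : Equiv.Perm (List (Fin d)))⁻¹
          * ((h : ↥(Gamma d)) : Equiv.Perm (List (Fin d)))⁻¹ := rfl
    constructor
    · rw [hco, cRaw_mul hGHG (inv_mem hH), hcghg, hchinv, add_zero]
    · intro x
      rw [hco, tRaw_mul hGHG (inv_mem hH) x, hchinv, add_zero,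
        tRaw_mul hGH (inv_mem hG), hcginv, add_zero,
        tRaw_mul hG hH, hch, add_zero,
        tRaw_inv hH hch, tRaw_inv hG hcg]
      ring

end Aux
end FG

/-- For every `d ≥ 5`, the second level stabilizer of `Γ_d` equals the derived subgroup of
the first level stabilizer. -/
theorem stmt_7 (d : ℕ) [NeZero d] (hd : 5 ≤ d) :
    FG.Stab d 2 = ⁅FG.Stab d 1, FG.Stab d 1⁆ := by
  exact FG.main_result hd
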